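/- If G is a simple graph with girth at least 5 on 40 vertices with 120 edges, then the maximum degree of G is at most 7. -/

import Mathlib

open Finset

namespace Stmt19Aux

variable {V : Type*} {G : SimpleGraph V}

lemma cycles_long (hg : 5 ≤ G.girth) {a : V} (w : G.Walk a a) (hw : w.IsCycle) :
    5 ≤ w.length := by
  have h1 : G.egirth ≠ ⊤ := by
    intro h
    rw [SimpleGraph.egirth_eq_top] at h
    exact h _ hw
  have h2 : (5 : ℕ∞) ≤ G.egirth := by
    have := ENat.coe_toNat h1
    rw [← this]
    exact_mod_cast hg
  have := SimpleGraph.le_egirth.mp h2 a w hw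
  exact_mod_cast this

lemma no_tri (hg : 5 ≤ G.girth) {a b c : V} (hab : G.Adj a b) (hbc : G.Adj b c)
    (hca : G.Adj c a) : False := by
  have hw : (SimpleGraph.Walk.cons hab (.cons hbc (.cons hca .nil))).IsCycle := by
    refine ⟨⟨?_, by simp⟩, ?_⟩
    · constructor
      simp [SimpleGraph.Walk.edges, hab.ne, hbc.ne, hca.ne, hab.ne', hbc.ne', hca.ne',
        Sym2.eq_iff]
    · simp [SimpleGraph.Walk.support]
      exact ⟨⟨hbc.ne, hab.ne'⟩, hca.ne⟩
  have := cycles_long hg _ hw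
  simp at this

lemma no_quad (hg : 5 ≤ G.girth) {a b c d : V} (hab : G.Adj a b) (hbc : G.Adj b c)
    (hcd : G.Adj c d) (hda : G.Adj d a) (hac : a ≠ c) (hbd : b ≠ d) : False := by
  have hw : (SimpleGraph.Walk.cons hab (.cons hbc (.cons hcd (.cons hda .nil)))).IsCycle := by
    refine ⟨⟨?_, by simp⟩, ?_⟩
    · constructor
      simp [SimpleGraph.Walk.edges, hab.ne, hbc.ne, hcd.ne, hda.ne, hab.ne', hbc.ne', hcd.ne',
        hda.ne', hac, hbd, hac.symm, hbd.symm, Sym2.eq_iff]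
    · simp [SimpleGraph.Walk.support]
      exact ⟨⟨hbc.ne, hbd, hab.ne'⟩, ⟨hcd.ne, hac.symm⟩, hda.ne⟩
  have := cycles_long hg _ hw
  simp at this


variable [Fintype V] [DecidableEq V] [DecidableRel G.Adj]

lemma moore (hg : 5 ≤ G.girth) (v : V) :
    ∑ w ∈ G.neighborFinset v, G.degree w ≤ Fintype.card V - 1 := by
  have hsum : ∑ w ∈ G.neighborFinset v, G.degree w
      = ((G.neighborFinset v).sigma fun w => G.neighborFinset w).card := by
    rw [Finset.card_sigma]; rfl
  rw [hsum]
  have hcard : (Finset.univ.erase v).card = Fintype.card V - 1 := by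
    rw [Finset.card_erase_of_mem (Finset.mem_univ v), Finset.card_univ]
  rw [← hcard]
  apply Finset.card_le_card_of_injOn (fun p => if p.2 = v then p.1 else p.2)
  · rintro ⟨w, x⟩ hp
    rw [Finset.mem_coe, Finset.mem_sigma, SimpleGraph.mem_neighborFinset, SimpleGraph.mem_neighborFinset] at hp
    obtain ⟨hw, hx⟩ := hp
    simp only [Finset.mem_erase, Finset.mem_univ, and_true]
    by_cases h : x = v <;> simp [h]
    · exact hw.ne'
  · rintro ⟨w, x⟩ hp ⟨w', x'⟩ hq heq
    rw [Finset.mem_coe, Finset.mem_sigma, SimpleGraph.mem_neighborFinset,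
      SimpleGraph.mem_neighborFinset] at hp hq
    obtain ⟨hw, hx⟩ := hp
    obtain ⟨hw', hx'⟩ := hq
    simp only at heq
    by_cases h1 : x = v <;> by_cases h2 : x' = v <;> simp only [h1, h2, if_true, if_pos,
      if_neg, if_false, reduceIte] at heq
    · exact Sigma.ext heq (by rw [h1, h2])
    · exact absurd (no_tri hg hw (heq ▸ hx').symm hw'.symm) id
    · exact absurd (no_tri hg hw' (heq ▸ hx).symm hw.symm) id
    · by_cases hww : w = w'
      · exact Sigma.ext hww (by rw [heq])
      · exact absurd (no_quad hg hw hx (heq ▸ hx').symm hw'.symm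
          (fun hvx => h1 hvx.symm) hww) id

lemma keycount (hg : 5 ≤ G.girth) (B : Finset V) :
    (∑ x : V, ((G.neighborFinset x ∩ B).card * (G.neighborFinset x ∩ B).card
        - (G.neighborFinset x ∩ B).card))
      + ∑ u ∈ B, (G.neighborFinset u ∩ B).card
      ≤ B.card * B.card - B.card := by
  have h1 : ∑ x : V, ((G.neighborFinset x ∩ B).card * (G.neighborFinset x ∩ B).card
        - (G.neighborFinset x ∩ B).card)
      = (Finset.univ.sigma fun x => (G.neighborFinset x ∩ B).offDiag).card := by
    rw [Finset.card_sigma]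
    exact Finset.sum_congr rfl fun x _ => (Finset.offDiag_card _).symm
  have h2 : ∑ u ∈ B, (G.neighborFinset u ∩ B).card
      = (B.sigma fun u => G.neighborFinset u ∩ B).card := by
    rw [Finset.card_sigma]
  have i1 : (Finset.univ.sigma fun x => (G.neighborFinset x ∩ B).offDiag).card
      ≤ (B.offDiag.filter fun p => ¬ G.Adj p.1 p.2).card := by
    apply Finset.card_le_card_of_injOn (fun p => p.2)
    · rintro ⟨x, p1, p2⟩ hp
      rw [Finset.mem_coe, Finset.mem_sigma] at hp
      obtain ⟨-, hp⟩ := hp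
      rw [Finset.mem_offDiag] at hp
      obtain ⟨hm1, hm2, hne⟩ := hp
      rw [Finset.mem_inter, SimpleGraph.mem_neighborFinset] at hm1 hm2
      simp only [Finset.mem_coe, Finset.mem_filter, Finset.mem_offDiag]
      exact ⟨⟨hm1.2, hm2.2, hne⟩, fun hadj => no_tri hg hm1.1 hadj hm2.1.symm⟩
    · rintro ⟨x, p1, p2⟩ hp ⟨x', p1', p2'⟩ hq heq
      rw [Finset.mem_coe, Finset.mem_sigma] at hp hq
      obtain ⟨-, hp⟩ := hp
      obtain ⟨-, hq⟩ := hq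
      rw [Finset.mem_offDiag] at hp hq
      obtain ⟨hm1, hm2, hne⟩ := hp
      obtain ⟨hm1', hm2', hne'⟩ := hq
      rw [Finset.mem_inter, SimpleGraph.mem_neighborFinset] at hm1 hm2 hm1' hm2'
      simp only at heq
      obtain ⟨e1, e2⟩ := Prod.mk.injEq _ _ _ _ ▸ heq
      subst e1; subst e2
      by_cases hxx : x = x'
      · exact Sigma.ext hxx (by rw [heq])
      · exact absurd (no_quad hg hm1.1 hm1'.1.symm hm2'.1 hm2.1.symm hxx hne) id
  have i2 : (B.sigma fun u => G.neighborFinset u ∩ B).card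
      = (B.offDiag.filter fun p => G.Adj p.1 p.2).card := by
    apply Finset.card_nbij (fun p => (p.1, p.2))
    · rintro ⟨u, x⟩ hp
      rw [Finset.mem_coe, Finset.mem_sigma] at hp
      obtain ⟨hu, hx⟩ := hp
      rw [Finset.mem_inter, SimpleGraph.mem_neighborFinset] at hx
      simp only [Finset.mem_coe, Finset.mem_filter, Finset.mem_offDiag]
      exact ⟨⟨hu, hx.2, hx.1.ne⟩, hx.1⟩
    · rintro ⟨u, x⟩ - ⟨u', x'⟩ - heq
      simp only at heq
      obtain ⟨e1, e2⟩ := Prod.mk.injEq _ _ _ _ ▸ heq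
      exact Sigma.ext e1 (by rw [e2])
    · rintro ⟨p1, p2⟩ hp
      simp only [Finset.coe_filter, Set.mem_setOf_eq, Finset.mem_offDiag] at hp
      obtain ⟨⟨hb1, hb2, -⟩, hadj⟩ := hp
      refine ⟨⟨p1, p2⟩, ?_, rfl⟩
      simp only [Finset.mem_coe, Finset.mem_sigma, Finset.mem_inter,
        SimpleGraph.mem_neighborFinset]
      exact ⟨hb1, hadj, hb2⟩
  rw [h1, h2, i2, ← Finset.offDiag_card]
  calc (Finset.univ.sigma fun x => (G.neighborFinset x ∩ B).offDiag).card
      + (B.offDiag.filter fun p => G.Adj p.1 p.2).card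
      ≤ (B.offDiag.filter fun p => ¬ G.Adj p.1 p.2).card
        + (B.offDiag.filter fun p => G.Adj p.1 p.2).card := by omega
    _ = B.offDiag.card := by
        rw [add_comm, Finset.card_filter_add_card_filter_not]

lemma final_ineq (d s : ℤ) (h8 : 8 ≤ d) (hds : d ≤ s) (hs : s ≤ 39) :
    (39 - d)*d*((39-d)*(39-d) - (39-d) + (s-d))
      < d*((240-2*s)*(240-2*s)) + (39-d)*((s-d)*(s-d)) := by
  nlinarith [sq_nonneg (s - d), sq_nonneg (39 - s), sq_nonneg (d - 8), sq_nonneg (s + d - 47),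
    mul_nonneg (sub_nonneg.2 hds) (sub_nonneg.2 hs), sq_nonneg (240 - 2*s),
    mul_nonneg (mul_nonneg (sub_nonneg.2 hds) (sub_nonneg.2 hs)) (by linarith : (0:ℤ) ≤ d - 8),
    mul_nonneg (sub_nonneg.2 hs) (by linarith : (0:ℤ) ≤ d - 8)]

end Stmt19Aux

open Stmt19Aux

set_option maxHeartbeats 1000000 in
/-- In any girth ≥ 5 graph with 40 vertices and 120 edges, the maximum degree
is at most 7. -/
theorem stmt19 {V : Type*} [Fintype V] (G : SimpleGraph V) [DecidableRel G.Adj]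
    (hn : Fintype.card V = 40) (he : G.edgeFinset.card = 120)
    (hg : 5 ≤ G.girth) :
    G.maxDegree ≤ 7 := by
  classical
  by_contra hcon
  push_neg at hcon
  have hne : Nonempty V := by
    rw [← Fintype.card_pos_iff, hn]; norm_num
  obtain ⟨v, hv⟩ := G.exists_maximal_degree_vertex
  set d := G.degree v with hddef
  have hd8 : 8 ≤ d := by omega
  have hd39 : d ≤ 39 := by
    have := G.degree_lt_card_verts v
    omega
  set A := G.neighborFinset v with hAdef
  have hAcard : A.card = d := rfl
  have hvA : v ∉ A := by
    rw [hAdef, SimpleGraph.mem_neighborFinset]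
    exact G.irrefl
  set B := Finset.univ \ insert v A with hBdef
  have hBcard : B.card = 39 - d := by
    rw [hBdef, Finset.card_sdiff_of_subset (Finset.subset_univ _),
      Finset.card_insert_of_notMem hvA, Finset.card_univ, hn, hAcard]
    omega
  set s := ∑ w ∈ A, G.degree w with hsdef
  have hs39 : s ≤ 39 := by
    have := moore hg v
    rw [hn] at this
    rw [hsdef, hAdef]
    omega
  have hds : d ≤ s := by
    have : ∀ w ∈ A, 1 ≤ G.degree w := by
      intro w hw
      rw [hAdef, SimpleGraph.mem_neighborFinset] at hw
      rw [← SimpleGraph.card_neighborFinset_eq_degree]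
      exact Finset.card_pos.mpr ⟨v, by rw [SimpleGraph.mem_neighborFinset]; exact hw.symm⟩
    calc d = ∑ _w ∈ A, 1 := by rw [Finset.sum_const, hAcard, smul_eq_mul, mul_one]
    _ ≤ s := Finset.sum_le_sum this
  have h240 : ∑ x : V, G.degree x = 240 := by
    rw [SimpleGraph.sum_degrees_eq_twice_card_edges, he]
  set c : V → ℕ := fun x => (G.neighborFinset x ∩ B).card with hcdef
  have hsplit : ∀ f : V → ℕ, ∑ x : V, f x = f v + ∑ w ∈ A, f w + ∑ u ∈ B, f u := by
    intro f
    have h1 := Finset.sum_sdiff (f := f) (Finset.subset_univ (insert v A))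
    rw [← hBdef] at h1
    rw [← h1, Finset.sum_insert hvA]
    ring
  -- c v = 0
  have hcv : c v = 0 := by
    rw [hcdef]
    simp only [Finset.card_eq_zero]
    rw [hBdef, ← hAdef]
    ext x
    simp only [Finset.mem_inter, Finset.mem_sdiff, Finset.mem_univ, Finset.mem_insert,
      Finset.notMem_empty, iff_false]
    rintro ⟨hx, -, hx2⟩
    exact hx2 (Or.inr hx)
  -- ∀ w ∈ A, c w + 1 = degree w
  have hcA : ∀ w ∈ A, c w + 1 = G.degree w := by
    intro w hwA
    have hvw : G.Adj v w := by rwa [hAdef, SimpleGraph.mem_neighborFinset] at hwA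
    have hinter : G.neighborFinset w ∩ insert v A = {v} := by
      ext x
      simp only [Finset.mem_inter, SimpleGraph.mem_neighborFinset, Finset.mem_insert,
        Finset.mem_singleton]
      constructor
      · rintro ⟨hwx, hx | hx⟩
        · exact hx
        · rw [hAdef, SimpleGraph.mem_neighborFinset] at hx
          exact absurd (no_tri hg hvw hwx hx.symm) id
      · rintro rfl
        exact ⟨hvw.symm, Or.inl rfl⟩
    have hsub : G.neighborFinset w ∩ B = G.neighborFinset w \ insert v A := by
      rw [hBdef]
      ext x
      simp only [Finset.mem_inter, Finset.mem_sdiff, Finset.mem_univ, true_and]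
    have := Finset.card_inter_add_card_sdiff (G.neighborFinset w) (insert v A)
    rw [hinter] at this
    simp only [Finset.card_singleton] at this
    rw [hcdef]
    simp only
    rw [hsub, SimpleGraph.card_neighborFinset_eq_degree] at *
    omega
  -- double counting: ∑ x, c x = ∑ u ∈ B, degree u
  have hdouble : ∑ x : V, c x = ∑ u ∈ B, G.degree u := by
    have hc1 : ∀ x : V, c x = ∑ u ∈ B, (if G.Adj x u then 1 else 0) := by
      intro x
      rw [hcdef]
      simp only
      rw [← Finset.card_filter]
      congr 1
      ext u
      simp only [Finset.mem_inter, SimpleGraph.mem_neighborFinset, Finset.mem_filter, and_comm]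
    have hc2 : ∀ u : V, ∑ x : V, (if G.Adj x u then 1 else 0) = G.degree u := by
      intro u
      rw [← Finset.card_filter, ← SimpleGraph.card_neighborFinset_eq_degree]
      congr 1
      ext x
      simp only [Finset.mem_filter, Finset.mem_univ, true_and, SimpleGraph.mem_neighborFinset]
      exact ⟨fun h => h.symm, fun h => h.symm⟩
    calc ∑ x : V, c x = ∑ x : V, ∑ u ∈ B, (if G.Adj x u then 1 else 0) :=
          Finset.sum_congr rfl fun x _ => hc1 x
      _ = ∑ u ∈ B, ∑ x : V, (if G.Adj x u then 1 else 0) := Finset.sum_comm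
      _ = ∑ u ∈ B, G.degree u := Finset.sum_congr rfl fun u _ => hc2 u
  -- quantities
  set SyB := ∑ u ∈ B, c u with hSyBdef
  set SAc := ∑ w ∈ A, c w with hSAcdef
  have hSAc : SAc + d = s := by
    rw [hSAcdef, hsdef]
    calc (∑ w ∈ A, c w) + d = ∑ w ∈ A, (c w + 1) := by
          rw [Finset.sum_add_distrib, Finset.sum_const, hAcard, smul_eq_mul, mul_one]
      _ = ∑ w ∈ A, G.degree w := Finset.sum_congr rfl hcA
  have hBdeg : d + s + ∑ u ∈ B, G.degree u = 240 := by
    have h1 := hsplit (fun x => G.degree x)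
    simp only at h1
    rw [h240, ← hddef, ← hsdef] at h1
    omega
  have hSyBeq : SyB + SAc = ∑ u ∈ B, G.degree u := by
    have h1 := hsplit c
    rw [hdouble, hcv] at h1
    omega
  set SB2 := ∑ u ∈ B, (c u * c u - c u) with hSB2def
  set SA2 := ∑ w ∈ A, (c w * c w - c w) with hSA2def
  set YN := ∑ u ∈ B, (c u * c u) with hYNdef
  set ZN := ∑ w ∈ A, (c w * c w) with hZNdef
  have hle : ∀ n : ℕ, n ≤ n * n := fun n => by nlinarith
  have hYN : SB2 + SyB = YN := by
    rw [hSB2def, hSyBdef, hYNdef, ← Finset.sum_add_distrib]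
    exact Finset.sum_congr rfl fun u _ => Nat.sub_add_cancel (hle _)
  have hZN : SA2 + SAc = ZN := by
    rw [hSA2def, hSAcdef, hZNdef, ← Finset.sum_add_distrib]
    exact Finset.sum_congr rfl fun w _ => Nat.sub_add_cancel (hle _)
  have KC : (∑ x : V, (c x * c x - c x)) + ∑ u ∈ B, c u ≤ B.card * B.card - B.card :=
    keycount hg B
  have hKCsplit : SA2 + SB2 + SyB ≤ B.card * B.card - B.card := by
    have h2 := hsplit (fun x => c x * c x - c x)
    rw [hcv] at h2
    norm_num at h2
    rw [← hSA2def, ← hSB2def] at h2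
    rw [← hSyBdef] at KC
    omega
  -- Cauchy-Schwarz, in ℤ
  have hCy : (SyB:ℤ) * SyB ≤ (B.card:ℤ) * YN := by
    have h := sq_sum_le_card_mul_sum_sq (s := B) (f := fun u => (c u : ℤ))
    simp only [sq, ← Nat.cast_mul, ← Nat.cast_sum] at h
    rw [hSyBdef, hYNdef]
    exact_mod_cast h
  have hCz : (SAc:ℤ) * SAc ≤ (d:ℤ) * ZN := by
    have h := sq_sum_le_card_mul_sum_sq (s := A) (f := fun w => (c w : ℤ))
    simp only [sq, ← Nat.cast_mul, ← Nat.cast_sum, hAcard] at h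
    rw [hSAcdef, hZNdef]
    exact_mod_cast h
  -- cast the rest to ℤ
  have hbz : (B.card:ℤ) = 39 - (d:ℤ) := by
    have := hBcard
    omega
  have e1 : (SyB:ℤ) = 240 - 2 * (s:ℤ) := by omega
  have e2 : (SAc:ℤ) = (s:ℤ) - (d:ℤ) := by omega
  have KCz : (SA2:ℤ) + SB2 + SyB ≤ (B.card:ℤ) * B.card - B.card := by
    have h3 := hle B.card
    have := hKCsplit
    zify [h3] at this
    exact this
  have hYNz : (SB2:ℤ) + SyB = YN := by exact_mod_cast hYN
  have hZNz : (SA2:ℤ) + SAc = ZN := by exact_mod_cast hZN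
  have k3 : (YN:ℤ) + ZN ≤ (B.card:ℤ) * B.card - B.card + SAc := by linarith
  have hd0 : (0:ℤ) ≤ (d:ℤ) := by positivity
  have hb0 : (0:ℤ) ≤ (B.card:ℤ) := by positivity
  have k1 : (d:ℤ) * (SyB * SyB) ≤ (d:ℤ) * ((B.card:ℤ) * YN) :=
    mul_le_mul_of_nonneg_left hCy hd0
  have k2 : (B.card:ℤ) * (SAc * SAc) ≤ (B.card:ℤ) * ((d:ℤ) * ZN) :=
    mul_le_mul_of_nonneg_left hCz hb0
  have k4 : (B.card:ℤ) * (d:ℤ) * ((YN:ℤ) + ZN)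
      ≤ (B.card:ℤ) * (d:ℤ) * ((B.card:ℤ) * B.card - B.card + SAc) :=
    mul_le_mul_of_nonneg_left k3 (mul_nonneg hb0 hd0)
  have hcomb : (d:ℤ) * (SyB * SyB) + (B.card:ℤ) * (SAc * SAc)
      ≤ (B.card:ℤ) * (d:ℤ) * ((B.card:ℤ) * B.card - B.card + SAc) := by
    linarith only [k1, k2, k4]
  rw [hbz, e1, e2] at hcomb
  have hd8z : (8:ℤ) ≤ (d:ℤ) := by exact_mod_cast hd8
  have hdsz : (d:ℤ) ≤ (s:ℤ) := by exact_mod_cast hds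
  have hs39z : (s:ℤ) ≤ 39 := by exact_mod_cast hs39
  exact absurd hcomb (not_le.mpr (final_ineq _ _ hd8z hdsz hs39z))
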